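/- Let h : ℝ → ℝ be differentiable and strictly increasing with h' > 0, let g_1,…,g_n : (0,∞) → ℝ be differentiable with g_i' > 0, and let y_1,…,y_n : (0,∞) → ℝ be strictly increasing concave functions with y_i(1/g_i'(x)) = g_i(x) for all x > 0. Let A : (0,∞)^n → (0,∞)^n be a map such that for every β ∈ (0,∞)^n the first-order conditions β_i · h'(∑_j g_j(A(β)_j)) · g_i'(A(β)_i) = 1 hold for all i, and suppose the map G(β) := ∑_i g_i(A(β)_i) satisfies: for every β and every t > G(β) there exists ζ with ζ_i > β_i for all i and G(ζ) = t, and for every t ≤ G(β) there exists ζ with ζ_i ≤ β_i for all i and G(ζ) = t. Then the induced production function F(β) := h(G(β)) = h(∑_i g_i(A(β)_i)) is quasiconcave on (0,∞)^n. -/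
import Mathlib


/-- Quasiconcavity of the induced production function `F(β) = h(∑ i, g i (A β i))`
for a strongly separable production function. -/
theorem stmt_4 (n : ℕ) (h : ℝ → ℝ) (hh : Differentiable ℝ h)
    (hmono : StrictMono h) (hh' : ∀ x, 0 < deriv h x)
    (g : Fin n → ℝ → ℝ)
    (hgdiff : ∀ i, ∀ x > (0:ℝ), DifferentiableAt ℝ (g i) x)
    (hg' : ∀ i, ∀ x > (0:ℝ), 0 < deriv (g i) x)
    (y : Fin n → ℝ → ℝ)
    (hymono : ∀ i, StrictMonoOn (y i) (Set.Ioi 0))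
    (hyconc : ∀ i, ConcaveOn ℝ (Set.Ioi 0) (y i))
    (hy : ∀ i, ∀ x > (0:ℝ), y i (1 / deriv (g i) x) = g i x)
    (A : (Fin n → ℝ) → (Fin n → ℝ))
    (hA : ∀ β : Fin n → ℝ, (∀ i, 0 < β i) → ∀ i, 0 < A β i)
    (hFOC : ∀ β : Fin n → ℝ, (∀ i, 0 < β i) →
      ∀ i, β i * deriv h (∑ j, g j (A β j)) * deriv (g i) (A β i) = 1)
    (hup : ∀ β : Fin n → ℝ, (∀ i, 0 < β i) → ∀ t > ∑ i, g i (A β i),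
      ∃ ζ : Fin n → ℝ, (∀ i, 0 < ζ i) ∧ (∀ i, β i < ζ i) ∧ ∑ i, g i (A ζ i) = t)
    (hdown : ∀ β : Fin n → ℝ, (∀ i, 0 < β i) → ∀ t ≤ ∑ i, g i (A β i),
      ∃ ζ : Fin n → ℝ, (∀ i, 0 < ζ i) ∧ (∀ i, ζ i ≤ β i) ∧ ∑ i, g i (A ζ i) = t) :
    QuasiconcaveOn ℝ {β : Fin n → ℝ | ∀ i, 0 < β i}
      (fun β => h (∑ i, g i (A β i))) := by
  set G : (Fin n → ℝ) → ℝ := fun β => ∑ i, g i (A β i) with hG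
  have key : ∀ β : Fin n → ℝ, (∀ i, 0 < β i) →
      ∑ i, y i (β i * deriv h (G β)) = G β := by
    intro β hβ
    have : ∀ i ∈ Finset.univ, y i (β i * deriv h (G β)) = g i (A β i) := by
      intro i _
      have h1 := hFOC β hβ i
      have hApos := hA β hβ i
      have hg'pos := hg' i _ hApos
      have h2 : β i * deriv h (G β) = 1 / deriv (g i) (A β i) := by
        rw [eq_div_iff hg'pos.ne']
        exact h1
      rw [h2, hy i _ hApos]
    rw [Finset.sum_congr rfl this]
  intro r β₁ hβ₁ β₂ hβ₂ a b ha hb hab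
  obtain ⟨hβ₁s, hβ₁r⟩ := hβ₁
  obtain ⟨hβ₂s, hβ₂r⟩ := hβ₂
  have comb_pos : ∀ u v : ℝ, 0 < u → 0 < v → 0 < a * u + b * v := by
    intro u v hu hv
    rcases ha.lt_or_eq with h0 | h0
    · exact add_pos_of_pos_of_nonneg (mul_pos h0 hu) (mul_nonneg hb hv.le)
    · have hb1 : b = 1 := by linarith
      simp [← h0, hb1, hv]
  have hμpos : ∀ i, 0 < (a • β₁ + b • β₂) i := by
    intro i
    simpa using comb_pos _ _ (hβ₁s i) (hβ₂s i)
  refine ⟨hμpos, ?_⟩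
  have hmin : min (G β₁) (G β₂) ≤ G (a • β₁ + b • β₂) := by
    by_contra hcon
    push_neg at hcon
    rcases isEmpty_or_nonempty (Fin n) with hE | hE
    · simp [hG, Finset.univ_eq_empty] at hcon
    set t := min (G β₁) (G β₂) with htdef
    obtain ⟨ζ, hζpos, hζgt, hζG⟩ := hup _ hμpos t hcon
    obtain ⟨ζ₁, hζ₁pos, hζ₁le, hζ₁G⟩ := hdown β₁ hβ₁s t (min_le_left _ _)
    obtain ⟨ζ₂, hζ₂pos, hζ₂le, hζ₂G⟩ := hdown β₂ hβ₂s t (min_le_right _ _)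
    have ht' : 0 < deriv h t := hh' t
    have e0 : ∑ i, y i (ζ i * deriv h t) = t := by
      have h3 := key ζ hζpos
      rw [show G ζ = t from hζG] at h3
      exact h3
    have e1 : ∑ i, y i (ζ₁ i * deriv h t) = t := by
      have h3 := key ζ₁ hζ₁pos
      rw [show G ζ₁ = t from hζ₁G] at h3
      exact h3
    have e2 : ∑ i, y i (ζ₂ i * deriv h t) = t := by
      have h3 := key ζ₂ hζ₂pos
      rw [show G ζ₂ = t from hζ₂G] at h3
      exact h3
    have econc : t ≤ ∑ i, y i ((a * ζ₁ i + b * ζ₂ i) * deriv h t) := by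
      have step : ∀ i ∈ Finset.univ,
          a * y i (ζ₁ i * deriv h t) + b * y i (ζ₂ i * deriv h t)
            ≤ y i ((a * ζ₁ i + b * ζ₂ i) * deriv h t) := by
        intro i _
        have hc := (hyconc i).2 (Set.mem_Ioi.mpr (mul_pos (hζ₁pos i) ht'))
          (Set.mem_Ioi.mpr (mul_pos (hζ₂pos i) ht')) ha hb hab
        simp only [smul_eq_mul] at hc
        rw [show a * (ζ₁ i * deriv h t) + b * (ζ₂ i * deriv h t)
            = (a * ζ₁ i + b * ζ₂ i) * deriv h t by ring] at hc
        exact hc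
      have := Finset.sum_le_sum step
      rw [Finset.sum_add_distrib, ← Finset.mul_sum, ← Finset.mul_sum, e1, e2] at this
      have habt : a * t + b * t = t := by rw [← add_mul, hab, one_mul]
      linarith
    have estrict : ∑ i, y i ((a * ζ₁ i + b * ζ₂ i) * deriv h t)
        < ∑ i, y i (ζ i * deriv h t) := by
      apply Finset.sum_lt_sum_of_nonempty Finset.univ_nonempty
      intro i _
      have harg : a * ζ₁ i + b * ζ₂ i < ζ i := by
        have hμi : (a • β₁ + b • β₂) i = a * β₁ i + b * β₂ i := by simp
        have := hζgt i
        rw [hμi] at this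
        nlinarith [hζ₁le i, hζ₂le i, hβ₁s i, hβ₂s i]
      exact hymono i (Set.mem_Ioi.mpr (mul_pos (comb_pos _ _ (hζ₁pos i) (hζ₂pos i)) ht'))
        (Set.mem_Ioi.mpr (mul_pos (hζpos i) ht'))
        (mul_lt_mul_of_pos_right harg ht')
    linarith
  have hles : h (min (G β₁) (G β₂)) ≤ h (G (a • β₁ + b • β₂)) := hmono.monotone hmin
  rcases min_cases (G β₁) (G β₂) with ⟨heq, _⟩ | ⟨heq, _⟩ <;>
    rw [heq] at hles <;> simp only [hG] at * <;> linarith
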